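/- arXiv:2003.07625 — 3 statements merged into one kernel-verified Lean document; each statement's English description precedes it below -/
import Mathlib

section
/- Let r₀ : [0,T] → ℝ be continuously differentiable, and suppose there exists t₀ ∈ (0,T] with |r₀(t₀)| > |r₀(0)|. Define Λ_λ(t₀) = ∫₀^{t₀} (sin(√λ (t₀ - s))/√λ) r₀(s) ds for λ > 0. Then there exist constants c₀ > 0 and λ₀ > 0 such that for all λ ≥ λ₀, |Λ_λ(t₀)| > c₀/λ. -/
open Real MeasureTheory Set Filter
open scoped FourierTransform Topology Interval

lemma aux_RL (t₀ : ℝ) (ht : 0 ≤ t₀) (g : ℝ → ℝ) (hg : ContinuousOn g (Icc 0 t₀)) :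
    Tendsto (fun b : ℝ => ∫ s in (0:ℝ)..t₀, g s * Real.cos (b * (t₀ - s))) atTop (𝓝 0) := by
  set f : ℝ → ℂ := (Icc (0:ℝ) t₀).indicator (fun s => (g s : ℂ)) with hf
  have hbound : ∀ b : ℝ,
      |∫ s in (0:ℝ)..t₀, g s * Real.cos (b * (t₀ - s))| ≤ ‖𝓕 f (b / (2 * π))‖ := by
    intro b
    have h1 : 𝓕 f (b / (2 * π))
        = ∫ s in Icc (0:ℝ) t₀, Complex.exp ((-(b*s) : ℝ) * Complex.I) * (g s : ℂ) := by
      rw [Real.fourier_real_eq_integral_exp_smul]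
      rw [← integral_indicator measurableSet_Icc]
      congr 1 with v
      by_cases hv : v ∈ Icc (0:ℝ) t₀
      · simp only [hf, Set.indicator_of_mem hv, smul_eq_mul]
        rw [show (-2 * π * v * (b / (2 * π)) : ℝ) = -(b*v) from by
          field_simp]
      · simp [hf, Set.indicator_of_notMem hv]
    have h2 : Complex.exp ((b * t₀ : ℝ) * Complex.I) * 𝓕 f (b / (2 * π))
        = ∫ s in Icc (0:ℝ) t₀, Complex.exp ((b*(t₀-s) : ℝ) * Complex.I) * (g s : ℂ) := by
      rw [h1, ← integral_const_mul]
      congr 1 with s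
      rw [← mul_assoc, ← Complex.exp_add]
      congr 2
      push_cast
      ring
    have hint : IntegrableOn (fun s => Complex.exp ((b*(t₀-s) : ℝ) * Complex.I) * (g s : ℂ))
        (Icc (0:ℝ) t₀) := by
      apply ContinuousOn.integrableOn_compact isCompact_Icc
      exact (Continuous.continuousOn (by fun_prop)).mul
        (Complex.continuous_ofReal.comp_continuousOn hg)
    have h4 := integral_re hint
    simp only [RCLike.re_to_complex] at h4
    have h3 : (∫ s in (0:ℝ)..t₀, g s * Real.cos (b * (t₀ - s)))
        = (Complex.exp ((b * t₀ : ℝ) * Complex.I) * 𝓕 f (b / (2 * π))).re := by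
      rw [h2, ← h4]
      rw [intervalIntegral.integral_of_le ht, ← integral_Icc_eq_integral_Ioc]
      congr 1 with s
      rw [Complex.mul_re, Complex.exp_ofReal_mul_I_re]
      simp [mul_comm]
    rw [h3]
    calc |(Complex.exp ((b * t₀ : ℝ) * Complex.I) * 𝓕 f (b / (2 * π))).re|
        ≤ ‖Complex.exp ((b * t₀ : ℝ) * Complex.I) * 𝓕 f (b / (2 * π))‖ :=
          Complex.abs_re_le_norm _
      _ = ‖𝓕 f (b / (2 * π))‖ := by
          rw [norm_mul, Complex.norm_exp_ofReal_mul_I, one_mul]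
  have htend : Tendsto (fun b : ℝ => ‖𝓕 f (b / (2 * π))‖) atTop (𝓝 0) := by
    have h1 : Tendsto (fun b : ℝ => b / (2 * π)) atTop atTop :=
      tendsto_id.atTop_div_const (by positivity)
    have := (Real.zero_at_infty_fourier f).comp
      (h1.mono_right _root_.atTop_le_cocompact)
    simpa using this.norm
  exact squeeze_zero_norm (fun b => (Real.norm_eq_abs _ ▸ hbound b)) htend

theorem stmt_0 (T : ℝ) (hT : 0 < T) (r₀ : ℝ → ℝ)
    (hr : ContDiffOn ℝ 1 r₀ (Icc 0 T))
    (t₀ : ℝ) (ht₀ : t₀ ∈ Ioc 0 T)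
    (h : |r₀ 0| < |r₀ t₀|) :
    ∃ c₀ > (0:ℝ), ∃ lam₀ > (0:ℝ), ∀ lam ≥ lam₀,
      c₀ / lam < |∫ s in (0:ℝ)..t₀, (Real.sin (Real.sqrt lam * (t₀ - s)) / Real.sqrt lam) * r₀ s| := by
  obtain ⟨ht0, ht0T⟩ := ht₀
  set g : ℝ → ℝ := derivWithin r₀ (Icc 0 T) with hgdef
  have hsub : Icc (0:ℝ) t₀ ⊆ Icc 0 T := Icc_subset_Icc le_rfl ht0T
  have hgcont : ContinuousOn g (Icc 0 T) :=
    hr.continuousOn_derivWithin (uniqueDiffOn_Icc hT) le_rfl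
  have hrd : ∀ x ∈ Icc (0:ℝ) t₀, HasDerivWithinAt r₀ (g x) (Icc 0 t₀) x := fun x hx =>
    ((hr.differentiableOn one_ne_zero x (hsub hx)).hasDerivWithinAt).mono hsub
  have IBP : ∀ b : ℝ, 0 < b →
      (∫ s in (0:ℝ)..t₀, (Real.sin (b * (t₀ - s)) / b) * r₀ s)
      = (1 / (b*b)) * (r₀ t₀ - Real.cos (b * t₀) * r₀ 0
          - ∫ s in (0:ℝ)..t₀, g s * Real.cos (b * (t₀ - s))) := by
    intro b hb
    have huIcc : [[(0:ℝ), t₀]] = Icc (0:ℝ) t₀ := uIcc_of_le ht0.le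
    have hv : ∀ x ∈ Icc (0:ℝ) t₀,
        HasDerivWithinAt (fun s => Real.cos (b * (t₀ - s))) (b * Real.sin (b * (t₀ - x)))
          (Icc (0:ℝ) t₀) x := by
      intro x _
      have h1 : HasDerivAt (fun s : ℝ => b * (t₀ - s)) (-b) x := by
        simpa using ((hasDerivAt_id x).const_sub t₀).const_mul b
      have h2 := h1.cos
      have h3 : -Real.sin (b * (t₀ - x)) * (-b) = b * Real.sin (b * (t₀ - x)) := by ring
      rw [h3] at h2
      exact h2.hasDerivWithinAt
    have hvint : IntervalIntegrable (fun x => b * Real.sin (b * (t₀ - x))) volume 0 t₀ :=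
      Continuous.intervalIntegrable (by fun_prop) 0 t₀
    have hkey := intervalIntegral.integral_mul_deriv_eq_deriv_mul_of_hasDerivWithinAt
      (u := r₀) (u' := g) (v := fun s => Real.cos (b * (t₀ - s)))
      (v' := fun x => b * Real.sin (b * (t₀ - x)))
      (a := 0) (b := t₀)
      (by rw [huIcc]; exact hrd) (by rw [huIcc]; exact hv)
      ((hgcont.mono hsub).intervalIntegrable_of_Icc ht0.le) hvint
    have hrw : (∫ s in (0:ℝ)..t₀, (Real.sin (b * (t₀ - s)) / b) * r₀ s)
        = (1/(b*b)) * ∫ s in (0:ℝ)..t₀, r₀ s * (b * Real.sin (b * (t₀ - s))) := by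
      rw [← intervalIntegral.integral_const_mul]
      congr 1 with s
      field_simp
    rw [hrw, hkey]
    simp only [sub_self, mul_zero, Real.cos_zero, mul_one, sub_zero]
    ring
  set δ := |r₀ t₀| - |r₀ 0| with hδ
  have hδpos : 0 < δ := sub_pos.2 h
  have htg := aux_RL t₀ ht0.le g (hgcont.mono hsub)
  have hev : ∀ᶠ b in atTop,
      |∫ s in (0:ℝ)..t₀, g s * Real.cos (b * (t₀ - s))| < δ/2 := by
    have := Metric.tendsto_nhds.mp htg (δ/2) (by positivity)
    simpa [Real.dist_eq] using this
  obtain ⟨B, hB⟩ := eventually_atTop.mp hev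
  refine ⟨δ/2, by positivity, max 1 (B^2), lt_of_lt_of_le one_pos (le_max_left _ _),
    fun lam hlam => ?_⟩
  have hlam1 : (1:ℝ) ≤ lam := le_trans (le_max_left _ _) hlam
  have hlampos : 0 < lam := lt_of_lt_of_le one_pos hlam1
  set b := Real.sqrt lam with hb
  have hbpos : 0 < b := Real.sqrt_pos.2 hlampos
  have hbB : B ≤ b := by
    calc B ≤ |B| := le_abs_self B
      _ = Real.sqrt (B^2) := (Real.sqrt_sq_eq_abs B).symm
      _ ≤ b := Real.sqrt_le_sqrt (le_trans (le_max_right _ _) hlam)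
  have hIb : |∫ s in (0:ℝ)..t₀, g s * Real.cos (b * (t₀ - s))| < δ/2 := hB b hbB
  rw [IBP b hbpos]
  have hbb : b * b = lam := Real.mul_self_sqrt hlampos.le
  rw [hbb, abs_mul, abs_of_pos (by positivity : (0:ℝ) < 1/lam)]
  set I := ∫ s in (0:ℝ)..t₀, g s * Real.cos (b * (t₀ - s)) with hI
  set c := Real.cos (b * t₀) * r₀ 0 with hc
  have t1 : |r₀ t₀| ≤ |r₀ t₀ - c - I| + |c| + |I| := by
    calc |r₀ t₀| = |(r₀ t₀ - c - I) + c + I| := by ring_nf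
      _ ≤ |(r₀ t₀ - c - I) + c| + |I| := abs_add_le _ _
      _ ≤ |r₀ t₀ - c - I| + |c| + |I| := by gcongr; exact abs_add_le _ _
  have t2 : |c| ≤ |r₀ 0| := by
    rw [hc, abs_mul]
    exact mul_le_of_le_one_left (abs_nonneg _) (Real.abs_cos_le_one _)
  have hS : δ/2 < |r₀ t₀ - c - I| := by
    have : |r₀ 0| < |r₀ t₀| := h
    linarith
  calc δ/2/lam < |r₀ t₀ - c - I| / lam := by gcongr
    _ = 1/lam * |r₀ t₀ - c - I| := by ring
end

section
/- Let r₁ : [0,T] × ℝ → ℝ be continuous, 2π-periodic in its second variable, with zero mean in the second variable: (1/(2π)) ∫₀^{2π} r₁(t,τ) dτ = 0 for all t. Then for any continuous function g : [0,T] → ℝ and any t ∈ [0,T], ∫₀^t g(s) r₁(s, ω s) ds → 0 as ω → ∞. -/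
open Real MeasureTheory Set Filter

private lemma reduce_mem (x : ℝ) : x - ⌊x / (2*π)⌋ * (2*π) ∈ Icc (0:ℝ) (2*π) := by
  have h2π : (0:ℝ) < 2*π := two_pi_pos
  have h1 : (⌊x / (2*π)⌋ : ℝ) * (2*π) ≤ x := by
    have := Int.floor_le (x / (2*π))
    calc (⌊x / (2*π)⌋ : ℝ) * (2*π) ≤ (x / (2*π)) * (2*π) := by gcongr
    _ = x := by field_simp
  have h2 : x < ((⌊x / (2*π)⌋ : ℝ) + 1) * (2*π) := by
    have := Int.lt_floor_add_one (x / (2*π))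
    calc x = (x / (2*π)) * (2*π) := by field_simp
    _ < ((⌊x / (2*π)⌋ : ℝ) + 1) * (2*π) := by gcongr
  constructor <;> nlinarith

private lemma reduce_eq {f : ℝ → ℝ} (hf : Function.Periodic f (2*π)) (x : ℝ) :
    f x = f (x - ⌊x / (2*π)⌋ * (2*π)) :=
  (hf.sub_int_mul_eq _).symm

private lemma aux_main (T : ℝ) (r : ℝ → ℝ → ℝ)
    (hc : Continuous fun p : ℝ × ℝ => r p.1 p.2)
    (hper : ∀ t τ, r t (τ + 2 * π) = r t τ)
    (hmean : ∀ t, ∫ τ in (0:ℝ)..(2 * π), r t τ = 0)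
    (t : ℝ) (ht : t ∈ Icc (0:ℝ) T) :
    Tendsto (fun ω : ℝ => ∫ s in (0:ℝ)..t, r s (ω * s)) atTop (nhds 0) := by
  obtain ⟨ht0, htT⟩ := ht
  have hT0 : (0:ℝ) ≤ T := le_trans ht0 htT
  have hc1 : ∀ c, Continuous (r c) := fun c =>
    hc.comp (continuous_const.prodMk continuous_id)
  have hper' : ∀ c, Function.Periodic (r c) (2*π) := fun c τ => hper c τ
  have hint : ∀ c a b, IntervalIntegrable (r c) volume a b := fun c a b =>
    (hc1 c).intervalIntegrable a b
  set F : ℝ → ℝ → ℝ := fun c x => ∫ σ in (0:ℝ)..x, r c σ with hFdef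
  have hFcont : Continuous fun p : ℝ × ℝ => F p.1 p.2 :=
    intervalIntegral.continuous_parametric_intervalIntegral_of_continuous (f := fun (p : ℝ × ℝ) σ => r p.1 σ)
      (by exact hc.comp (continuous_fst.fst.prodMk continuous_snd)) continuous_snd
  have hFper : ∀ c, Function.Periodic (F c) (2*π) := by
    intro c x
    have h1 : F c (x + 2*π) = F c x + ∫ σ in x..(x + 2*π), r c σ :=
      (intervalIntegral.integral_add_adjacent_intervals (hint c 0 x) (hint c x _)).symm
    have h2 : ∫ σ in x..(x + 2*π), r c σ = ∫ σ in (0:ℝ)..(0 + 2*π), r c σ :=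
      (hper' c).intervalIntegral_add_eq x 0
    rw [zero_add] at h2
    rw [h1, h2, hmean c, add_zero]
  obtain ⟨C, hC⟩ : ∃ C, ∀ c ∈ Icc (0:ℝ) T, ∀ x, |F c x| ≤ C := by
    have hK : IsCompact (Icc (0:ℝ) T ×ˢ Icc (0:ℝ) (2*π)) := isCompact_Icc.prod isCompact_Icc
    obtain ⟨C, hC⟩ := hK.exists_bound_of_continuousOn hFcont.continuousOn
    refine ⟨C, fun c hcm x => ?_⟩
    rw [show F c x = F c (x - ⌊x / (2*π)⌋ * (2*π)) from reduce_eq (hFper c) x]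
    simpa using hC (c, x - ⌊x / (2*π)⌋ * (2*π)) ⟨hcm, reduce_mem x⟩
  have hC0 : 0 ≤ C := le_trans (abs_nonneg _) (hC 0 ⟨le_refl 0, hT0⟩ 0)
  have key : ∀ c ∈ Icc (0:ℝ) T, ∀ a b : ℝ, ∀ ω : ℝ, 0 < ω →
      |∫ s in a..b, r c (ω * s)| ≤ 2 * C / ω := by
    intro c hcm a b ω hω
    have h1 : ∫ s in a..b, r c (ω * s) = ω⁻¹ • ∫ u in ω * a..ω * b, r c u :=
      intervalIntegral.integral_comp_mul_left (fun u => r c u) hω.ne'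
    have h2 : F c (ω * b) - F c (ω * a) = ∫ u in ω * a..ω * b, r c u :=
      intervalIntegral.integral_interval_sub_left (hint c 0 _) (hint c 0 _)
    rw [h1, ← h2, smul_eq_mul]
    have hd : |F c (ω * b) - F c (ω * a)| ≤ 2 * C := by
      calc |F c (ω * b) - F c (ω * a)| ≤ |F c (ω * b)| + |F c (ω * a)| := abs_sub _ _
      _ ≤ C + C := add_le_add (hC c hcm _) (hC c hcm _)
      _ = 2 * C := by ring
    calc |ω⁻¹ * (F c (ω * b) - F c (ω * a))|
        = ω⁻¹ * |F c (ω * b) - F c (ω * a)| := by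
          rw [abs_mul, abs_of_pos (inv_pos.mpr hω)]
    _ ≤ ω⁻¹ * (2 * C) := by gcongr
    _ = 2 * C / ω := by rw [div_eq_inv_mul, mul_comm]
  rw [NormedAddCommGroup.tendsto_nhds_zero]
  intro ε hε
  set ε' : ℝ := ε / (2 * (T + 1)) with hε'def
  have hε' : 0 < ε' := by positivity
  obtain ⟨δ, hδ0, hδ⟩ : ∃ δ > 0, ∀ s ∈ Icc (0:ℝ) T, ∀ s' ∈ Icc (0:ℝ) T,
      |s - s'| < δ → ∀ τ, |r s τ - r s' τ| ≤ ε' := by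
    have hK : IsCompact (Icc (0:ℝ) T ×ˢ Icc (0:ℝ) (2*π)) := isCompact_Icc.prod isCompact_Icc
    have huc : UniformContinuousOn (fun p : ℝ × ℝ => r p.1 p.2) _ :=
      hK.uniformContinuousOn_of_continuous hc.continuousOn
    rw [Metric.uniformContinuousOn_iff] at huc
    obtain ⟨δ, hδ0, hδ⟩ := huc ε' hε'
    refine ⟨δ, hδ0, fun s hs s' hs' hss τ => ?_⟩
    set y := τ - ⌊τ / (2*π)⌋ * (2*π) with hy
    have hym := reduce_mem τ
    rw [reduce_eq (hper' s) τ, reduce_eq (hper' s') τ, ← hy]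
    have hd : dist (s, y) (s', y) < δ := by
      rw [Prod.dist_eq]
      simpa [Real.dist_eq] using hss
    have := hδ (s, y) ⟨hs, hym⟩ (s', y) ⟨hs', hym⟩ hd
    rw [Real.dist_eq] at this
    exact this.le
  obtain ⟨N₀, hN₀⟩ := exists_nat_gt (t / δ)
  set N := max N₀ 1 with hNdef
  have hN1 : (1:ℝ) ≤ (N:ℝ) := by exact_mod_cast le_max_right N₀ 1
  have hNpos : (0:ℝ) < (N:ℝ) := lt_of_lt_of_le one_pos hN1
  have hNδ : t / (N:ℝ) < δ := by
    have h1 : t / δ < (N:ℝ) := lt_of_lt_of_le hN₀ (by exact_mod_cast le_max_left N₀ 1)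
    rw [div_lt_iff₀ hδ0] at h1
    rw [div_lt_iff₀ hNpos]
    linarith [mul_comm (N:ℝ) δ]
  set Δ : ℝ := t / (N:ℝ) with hΔdef
  have hΔ0 : 0 ≤ Δ := div_nonneg ht0 hNpos.le
  set a : ℕ → ℝ := fun i => (i:ℝ) * Δ with hadef
  have ha0 : a 0 = 0 := by simp [hadef]
  have haN : a N = t := by
    rw [hadef]; rw [hΔdef]; field_simp [hNpos.ne']
  have hamem : ∀ i ≤ N, a i ∈ Icc (0:ℝ) T := by
    intro i hi
    constructor
    · positivity
    · calc (i:ℝ) * Δ ≤ (N:ℝ) * Δ :=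
          mul_le_mul_of_nonneg_right (by exact_mod_cast hi) hΔ0
      _ = t := haN
      _ ≤ T := htT
  have hcomp : ∀ ω : ℝ, Continuous fun s => r s (ω * s) := fun ω =>
    hc.comp (continuous_id.prodMk (continuous_const.mul continuous_id))
  filter_upwards [eventually_gt_atTop (max 0 (4 * (N:ℝ) * C / ε))] with ω hω
  have hω0 : 0 < ω := lt_of_le_of_lt (le_max_left _ _) hω
  have hωC : 2 * (N:ℝ) * C / ω < ε / 2 := by
    have h1 : 4 * (N:ℝ) * C / ε < ω := lt_of_le_of_lt (le_max_right _ _) hω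
    rw [div_lt_iff₀ hε] at h1
    rw [div_lt_iff₀ hω0]
    nlinarith
  have hsplit : ∫ s in (0:ℝ)..t, r s (ω * s)
      = ∑ i ∈ Finset.range N, ∫ s in a i..a (i + 1), r s (ω * s) := by
    have h := intervalIntegral.sum_integral_adjacent_intervals (a := a) (μ := volume)
      (f := fun s => r s (ω * s)) (n := N)
      (fun k _ => ((hcomp ω).intervalIntegrable _ _))
    rw [ha0, haN] at h
    exact h.symm
  rw [hsplit]
  have hterm : ∀ i ∈ Finset.range N, |∫ s in a i..a (i + 1), r s (ω * s)| ≤ ε' * Δ + 2 * C / ω := by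
    intro i hi
    have hiN : i < N := Finset.mem_range.mp hi
    have hai : a i ∈ Icc (0:ℝ) T := hamem i hiN.le
    have hai1 : a (i + 1) ∈ Icc (0:ℝ) T := hamem (i + 1) hiN
    have hstep : a (i + 1) = a i + Δ := by rw [hadef]; push_cast; ring
    have hle : a i ≤ a (i + 1) := by rw [hstep]; linarith
    have hc2 : Continuous fun s : ℝ => r (a i) (ω * s) :=
      (hc1 (a i)).comp (continuous_const.mul continuous_id)
    have hsub : Continuous fun s => r s (ω * s) - r (a i) (ω * s) :=
      (hcomp ω).sub hc2
    have hsplit2 : ∫ s in a i..a (i + 1), r s (ω * s)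
        = (∫ s in a i..a (i + 1), (r s (ω * s) - r (a i) (ω * s)))
          + ∫ s in a i..a (i + 1), r (a i) (ω * s) := by
      rw [← intervalIntegral.integral_add (hsub.intervalIntegrable _ _)
        (hc2.intervalIntegrable _ _)]
      congr 1; ext s; ring
    rw [hsplit2]
    have h1 : |∫ s in a i..a (i + 1), (r s (ω * s) - r (a i) (ω * s))| ≤ ε' * Δ := by
      have hb : ∀ x ∈ Set.uIoc (a i) (a (i + 1)),
          ‖r x (ω * x) - r (a i) (ω * x)‖ ≤ ε' := by
        intro x hx
        rw [Set.uIoc_of_le hle] at hx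
        have hx0 : a i < x := hx.1
        have hx1 : x ≤ a (i + 1) := hx.2
        have hxm : x ∈ Icc (0:ℝ) T := ⟨le_trans hai.1 hx0.le, le_trans hx1 hai1.2⟩
        have hdist : |x - a i| < δ := by
          rw [abs_of_pos (by linarith)]
          have : x - a i ≤ Δ := by rw [hstep] at hx1; linarith
          exact lt_of_le_of_lt this hNδ
        rw [Real.norm_eq_abs]
        exact hδ x hxm (a i) hai hdist (ω * x)
      have := intervalIntegral.norm_integral_le_of_norm_le_const hb
      rw [Real.norm_eq_abs] at this
      calc |∫ s in a i..a (i + 1), (r s (ω * s) - r (a i) (ω * s))|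
          ≤ ε' * |a (i + 1) - a i| := this
      _ = ε' * Δ := by rw [hstep]; rw [add_sub_cancel_left, abs_of_nonneg hΔ0]
    have h2 : |∫ s in a i..a (i + 1), r (a i) (ω * s)| ≤ 2 * C / ω :=
      key (a i) hai _ _ ω hω0
    calc |(∫ s in a i..a (i + 1), (r s (ω * s) - r (a i) (ω * s)))
          + ∫ s in a i..a (i + 1), r (a i) (ω * s)|
        ≤ |∫ s in a i..a (i + 1), (r s (ω * s) - r (a i) (ω * s))|
          + |∫ s in a i..a (i + 1), r (a i) (ω * s)| := abs_add_le _ _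
    _ ≤ ε' * Δ + 2 * C / ω := add_le_add h1 h2
  have hsum : ‖∑ i ∈ Finset.range N, ∫ s in a i..a (i + 1), r s (ω * s)‖
      ≤ (N:ℝ) * (ε' * Δ + 2 * C / ω) := by
    rw [Real.norm_eq_abs]
    calc |∑ i ∈ Finset.range N, ∫ s in a i..a (i + 1), r s (ω * s)|
        ≤ ∑ i ∈ Finset.range N, |∫ s in a i..a (i + 1), r s (ω * s)| :=
          Finset.abs_sum_le_sum_abs _ _
    _ ≤ ∑ _i ∈ Finset.range N, (ε' * Δ + 2 * C / ω) := Finset.sum_le_sum hterm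
    _ = (N:ℝ) * (ε' * Δ + 2 * C / ω) := by
        rw [Finset.sum_const, Finset.card_range, nsmul_eq_mul]
  have hfin : (N:ℝ) * (ε' * Δ + 2 * C / ω) < ε := by
    have hNΔ : (N:ℝ) * Δ = t := haN
    have h1 : (N:ℝ) * (ε' * Δ) = ε' * t := by rw [← hNΔ]; ring
    have h2 : (N:ℝ) * (2 * C / ω) = 2 * (N:ℝ) * C / ω := by ring
    have h3 : ε' * t < ε / 2 := by
      rw [hε'def]
      rw [div_mul_eq_mul_div, div_lt_div_iff₀ (by linarith) (by norm_num)]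
      nlinarith
    calc (N:ℝ) * (ε' * Δ + 2 * C / ω) = ε' * t + 2 * (N:ℝ) * C / ω := by
          rw [mul_add, h1, h2]
    _ < ε / 2 + ε / 2 := add_lt_add h3 hωC
    _ = ε := by ring
  exact lt_of_le_of_lt hsum hfin

theorem stmt_3 (T : ℝ) (hT : 0 < T) (r₁ : ℝ → ℝ → ℝ)
    (hcont : Continuous fun p : ℝ × ℝ => r₁ p.1 p.2)
    (hper : ∀ t τ, r₁ t (τ + 2 * π) = r₁ t τ)
    (hmean : ∀ t, (1 / (2 * π)) * ∫ τ in (0:ℝ)..(2 * π), r₁ t τ = 0)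
    (g : ℝ → ℝ) (hg : ContinuousOn g (Icc 0 T)) :
    ∀ t ∈ Icc (0:ℝ) T,
      Tendsto (fun ω : ℝ => ∫ s in (0:ℝ)..t, g s * r₁ s (ω * s)) atTop (nhds 0) := by
  intro t ht
  set g' : ℝ → ℝ := fun s => (Icc (0:ℝ) T).restrict g (projIcc 0 T hT.le s) with hg'def
  have hg'cont : Continuous g' := hg.restrict.comp continuous_projIcc
  have hg'eq : ∀ s ∈ Icc (0:ℝ) T, g' s = g s := by
    intro s hs
    rw [hg'def]
    simp [projIcc_of_mem hT.le hs, Set.restrict_apply]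
    rfl
  set R : ℝ → ℝ → ℝ := fun c τ => g' c * r₁ c τ with hRdef
  have hRc : Continuous fun p : ℝ × ℝ => R p.1 p.2 :=
    (hg'cont.comp continuous_fst).mul hcont
  have hRper : ∀ c τ, R c (τ + 2 * π) = R c τ := by
    intro c τ; rw [hRdef]; simp [hper c τ]
  have hRmean : ∀ c, ∫ τ in (0:ℝ)..(2 * π), R c τ = 0 := by
    intro c
    rw [hRdef]
    simp only
    rw [intervalIntegral.integral_const_mul]
    have h := hmean c
    have h2π : (1 / (2 * π)) ≠ 0 := by positivity
    rcases mul_eq_zero.mp h with h' | h'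
    · exact absurd h' h2π
    · rw [h', mul_zero]
  have hmain := aux_main T R hRc hRper hRmean t ht
  refine hmain.congr fun ω => ?_
  apply intervalIntegral.integral_congr
  intro s hs
  rw [uIcc_of_le ht.1] at hs
  have hsm : s ∈ Icc (0:ℝ) T := ⟨hs.1, le_trans hs.2 ht.2⟩
  simp only [hRdef]
  rw [hg'eq s hsm]
end

section
/- Let r₁ : [0,T] × ℝ → ℝ be continuous, 2π-periodic in τ, with ⟨r₁(t,·)⟩ = 0 for each t, and uniformly continuous on [0,T] × ℝ. Then for every λ > 0, sup_{t∈[0,T]} |∫₀^t sin(√λ(t−s)) r₁(s, ωs) ds| → 0 as ω → ∞. -/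
open Real MeasureTheory Set Filter intervalIntegral

/-- A continuous periodic function with mean zero has bounded antiderivative,
hence all its interval integrals are bounded. -/
lemma osc_aux (r : ℝ → ℝ) (hc : Continuous r) (hper : Function.Periodic r (2*π))
    (hmean : ∫ τ in (0:ℝ)..(2*π), r τ = 0) (M : ℝ) (hM : ∀ τ, |r τ| ≤ M) :
    ∀ α β : ℝ, |∫ u in α..β, r u| ≤ 4 * π * M := by
  have hM0 : 0 ≤ M := le_trans (abs_nonneg _) (hM 0)
  set H : ℝ → ℝ := fun x => ∫ u in (0:ℝ)..x, r u with hH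
  have hint : ∀ a b : ℝ, IntervalIntegrable r volume a b := fun a b =>
    hc.intervalIntegrable a b
  have hHper : Function.Periodic H (2*π) := by
    intro x
    have h1 : H (x + 2*π) = H x + ∫ u in x..(x+2*π), r u :=
      (integral_add_adjacent_intervals (hint 0 x) (hint x (x+2*π))).symm
    have h2 : (∫ u in x..(x+2*π), r u) = ∫ u in (0:ℝ)..(0+2*π), r u :=
      hper.intervalIntegral_add_eq x 0
    rw [h1, h2]
    simp [hmean]
  have hHbd : ∀ x, |H x| ≤ 2 * π * M := by
    intro x
    obtain ⟨y, hy, hxy⟩ := hHper.exists_mem_Ico₀ Real.two_pi_pos x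
    rw [hxy]
    have : ‖∫ u in (0:ℝ)..y, r u‖ ≤ M * |y - 0| :=
      intervalIntegral.norm_integral_le_of_norm_le_const fun u _ => hM u
    calc |H y| ≤ M * |y - 0| := this
      _ ≤ M * (2*π) := by
          apply mul_le_mul_of_nonneg_left _ hM0
          rw [sub_zero, abs_of_nonneg hy.1]
          exact hy.2.le
      _ = 2 * π * M := by ring
  intro α β
  have h3 : (∫ u in α..β, r u) = H β - H α := by
    rw [hH]
    exact (integral_interval_sub_left (hint 0 β) (hint 0 α)).symm
  rw [h3]
  calc |H β - H α| ≤ |H β| + |H α| := abs_sub _ _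
    _ ≤ 2*π*M + 2*π*M := add_le_add (hHbd β) (hHbd α)
    _ = 4*π*M := by ring


lemma bound_aux (T : ℝ) (hT : 0 < T) (r₁ : ℝ → ℝ → ℝ)
    (hcont : Continuous fun p : ℝ × ℝ => r₁ p.1 p.2)
    (hper : ∀ t τ, r₁ t (τ + 2 * π) = r₁ t τ) :
    ∃ M : ℝ, 0 < M ∧ ∀ s ∈ Icc (0:ℝ) T, ∀ τ : ℝ, |r₁ s τ| ≤ M := by
  obtain ⟨M, hM⟩ := (isCompact_Icc.prod isCompact_Icc :
      IsCompact (Icc (0:ℝ) T ×ˢ Icc (0:ℝ) (2*π))).exists_bound_of_continuousOn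
    hcont.continuousOn
  have hM0 : 0 ≤ M := le_trans (norm_nonneg _)
    (hM (0, 0) ⟨⟨le_refl 0, hT.le⟩, ⟨le_refl 0, Real.two_pi_pos.le⟩⟩)
  refine ⟨M + 1, by linarith, fun s hs τ => ?_⟩
  have hp : Function.Periodic (r₁ s) (2*π) := hper s
  obtain ⟨y, hy, hxy⟩ := hp.exists_mem_Ico₀ Real.two_pi_pos τ
  calc |r₁ s τ| = ‖r₁ s y‖ := by rw [hxy]; rfl
    _ ≤ M := hM (s, y) ⟨hs, ⟨hy.1, hy.2.le⟩⟩
    _ ≤ M + 1 := by linarith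


lemma key_aux (T : ℝ) (hT : 0 < T) (r₁ : ℝ → ℝ → ℝ)
    (hcont : Continuous fun p : ℝ × ℝ => r₁ p.1 p.2)
    (hper : ∀ t τ, r₁ t (τ + 2 * π) = r₁ t τ)
    (hmean : ∀ t, ∫ τ in (0:ℝ)..(2 * π), r₁ t τ = 0)
    (hucont : ∀ ε > (0:ℝ), ∃ δ > (0:ℝ), ∀ t₁ t₂ τ₁ τ₂ : ℝ,
      t₁ ∈ Icc (0:ℝ) T → t₂ ∈ Icc (0:ℝ) T → |t₁ - t₂| < δ → |τ₁ - τ₂| < δ →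
      |r₁ t₁ τ₁ - r₁ t₂ τ₂| < ε)
    (a : ℝ → ℝ) (hac : Continuous a) (ha1 : ∀ s, |a s| ≤ 1)
    (K : ℝ) (hK : 0 ≤ K) (haK : ∀ s₁ s₂ : ℝ, |a s₁ - a s₂| ≤ K * |s₁ - s₂|)
    (ε : ℝ) (hε : 0 < ε) :
    ∃ Ω : ℝ, 1 ≤ Ω ∧ ∀ ω : ℝ, Ω ≤ ω → ∀ t ∈ Icc (0:ℝ) T,
      |∫ s in (0:ℝ)..t, a s * r₁ s (ω * s)| ≤ ε := by
  obtain ⟨M, hM0, hMb⟩ := bound_aux T hT r₁ hcont hper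
  obtain ⟨δ₀, hδ₀, hδprop⟩ := hucont (ε/(4*T)) (by positivity)
  set δ : ℝ := min δ₀ (ε/(4*T*(K*M+1))) with hδdef
  have hδpos : 0 < δ := lt_min hδ₀ (by positivity)
  obtain ⟨N, hN⟩ := exists_nat_gt (T/δ)
  have hNpos : 0 < (N:ℝ) := lt_trans (by positivity) hN
  have hTN : T/N < δ := by
    rw [div_lt_iff₀ hNpos]
    rw [div_lt_iff₀ hδpos] at hN
    linarith [hN]
  refine ⟨max 1 (8*π*M*N/ε), le_max_left _ _, fun ω hω t ht => ?_⟩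
  have hω1 : (1:ℝ) ≤ ω := le_trans (le_max_left _ _) hω
  have hωpos : 0 < ω := lt_of_lt_of_le one_pos hω1
  have hωbig : 8*π*M*N/ε ≤ ω := le_trans (le_max_right _ _) hω
  have ht0 : 0 ≤ t := ht.1
  have htT : t ≤ T := ht.2
  set f : ℝ → ℝ := fun s => a s * r₁ s (ω * s) with hfdef
  have hfc : Continuous f := by
    apply hac.mul
    exact hcont.comp (continuous_id.prodMk (continuous_const.mul continuous_id))
  have hfint : ∀ c d : ℝ, IntervalIntegrable f volume c d := fun c d =>
    hfc.intervalIntegrable c d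
  set P : ℕ → ℝ := fun j => (j:ℝ) * (t/N) with hPdef
  have hPmono : ∀ j k : ℕ, j ≤ k → P j ≤ P k := by
    intro j k hjk
    apply mul_le_mul_of_nonneg_right _ (by positivity)
    exact_mod_cast hjk
  have hPmem : ∀ j : ℕ, j ≤ N → P j ∈ Icc (0:ℝ) T := by
    intro j hj
    constructor
    · positivity
    · calc (j:ℝ) * (t/N) ≤ (N:ℝ) * (t/N) := by
            apply mul_le_mul_of_nonneg_right _ (by positivity)
            exact_mod_cast hj
        _ = t := by field_simp
        _ ≤ T := htT
  have hPN : P N = t := by simp only [hPdef]; field_simp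
  have hP0 : P 0 = 0 := by simp [hPdef]
  have hsum : ∫ s in (0:ℝ)..t, f s
      = ∑ j ∈ Finset.range N, ∫ s in P j..P (j+1), f s := by
    rw [sum_integral_adjacent_intervals (fun k _ => hfint _ _), hP0, hPN]
  -- per-piece bound
  have hpiece : ∀ j ∈ Finset.range N,
      |∫ s in P j..P (j+1), f s| ≤ ε/(2*T) * (t/N) + ω⁻¹ * (4*π*M) := by
    intro j hj
    rw [Finset.mem_range] at hj
    have hjN : j + 1 ≤ N := hj
    have hPj : P j ∈ Icc (0:ℝ) T := hPmem j (le_of_lt hj)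
    set g : ℝ → ℝ := fun s => a (P j) * r₁ (P j) (ω * s) with hgdef
    have hgc : Continuous g :=
      continuous_const.mul (hcont.comp (continuous_const.prodMk
        (continuous_const.mul continuous_id)))
    have hgint : IntervalIntegrable g volume (P j) (P (j+1)) :=
      hgc.intervalIntegrable _ _
    have hsub : (∫ s in P j..P (j+1), f s)
        = (∫ s in P j..P (j+1), f s - g s) + ∫ s in P j..P (j+1), g s := by
      rw [integral_sub (hfint _ _) hgint]; ring
    have hlen : P (j+1) - P j = t/N := by
      simp only [hPdef]; push_cast; ring
    -- bound the difference term
    have hdiff : |∫ s in P j..P (j+1), f s - g s| ≤ ε/(2*T) * (t/N) := by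
      have hb : ∀ s ∈ Set.uIoc (P j) (P (j+1)), ‖f s - g s‖ ≤ ε/(2*T) := by
        intro s hs
        rw [Set.uIoc_of_le (hPmono j (j+1) (by omega))] at hs
        have hs1 : P j < s := hs.1
        have hs2 : s ≤ P (j+1) := hs.2
        have hsmem : s ∈ Icc (0:ℝ) T :=
          ⟨le_trans hPj.1 hs1.le, le_trans (le_trans hs2 (hPmem _ hjN).2) le_rfl⟩
        have hclose : |s - P j| < δ := by
          rw [abs_of_nonneg (by linarith)]
          calc s - P j ≤ P (j+1) - P j := by linarith
            _ = t/N := hlen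
            _ ≤ T/N := by gcongr
            _ < δ := hTN
        have h1 : |r₁ s (ω*s) - r₁ (P j) (ω*s)| < ε/(4*T) :=
          hδprop s (P j) (ω*s) (ω*s) hsmem hPj
            (lt_of_lt_of_le hclose (min_le_left _ _)) (by simpa using hδ₀)
        have h2 : |a s - a (P j)| ≤ K * δ := by
          calc |a s - a (P j)| ≤ K * |s - P j| := haK _ _
            _ ≤ K * δ := mul_le_mul_of_nonneg_left hclose.le hK
        have h3 : K * δ * M ≤ ε/(4*T) := by
          have hδ2 : δ ≤ ε/(4*T*(K*M+1)) := min_le_right _ _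
          have : K * δ * M ≤ δ * (K*M+1) := by nlinarith [hδpos.le]
          calc K * δ * M ≤ δ * (K*M+1) := this
            _ ≤ (ε/(4*T*(K*M+1))) * (K*M+1) := by
                apply mul_le_mul_of_nonneg_right hδ2 (by positivity)
            _ = ε/(4*T) := by field_simp
        have hMr : |r₁ (P j) (ω*s)| ≤ M := hMb _ hPj _
        have key : f s - g s
            = a s * (r₁ s (ω*s) - r₁ (P j) (ω*s)) + (a s - a (P j)) * r₁ (P j) (ω*s) := by
          simp only [hfdef, hgdef]; ring
        rw [Real.norm_eq_abs, key]
        calc |a s * (r₁ s (ω*s) - r₁ (P j) (ω*s)) + (a s - a (P j)) * r₁ (P j) (ω*s)|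
            ≤ |a s * (r₁ s (ω*s) - r₁ (P j) (ω*s))| + |(a s - a (P j)) * r₁ (P j) (ω*s)| :=
              abs_add_le _ _
          _ = |a s| * |r₁ s (ω*s) - r₁ (P j) (ω*s)| + |a s - a (P j)| * |r₁ (P j) (ω*s)| := by
              rw [abs_mul, abs_mul]
          _ ≤ 1 * (ε/(4*T)) + (K*δ) * M := by
              apply add_le_add
              · exact mul_le_mul (ha1 s) h1.le (abs_nonneg _) one_pos.le
              · exact mul_le_mul h2 hMr (abs_nonneg _) (by positivity)
          _ ≤ ε/(4*T) + ε/(4*T) := by rw [one_mul]; exact add_le_add_right h3 _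
          _ = ε/(2*T) := by ring
      calc |∫ s in P j..P (j+1), f s - g s|
          ≤ ε/(2*T) * |P (j+1) - P j| :=
            intervalIntegral.norm_integral_le_of_norm_le_const hb
        _ = ε/(2*T) * (t/N) := by rw [hlen, abs_of_nonneg (by positivity)]
    -- bound the oscillatory term
    have hosc : |∫ s in P j..P (j+1), g s| ≤ ω⁻¹ * (4*π*M) := by
      have hrc : Continuous (r₁ (P j)) :=
        hcont.comp (continuous_const.prodMk continuous_id)
      have hrper : Function.Periodic (r₁ (P j)) (2*π) := hper (P j)
      have hosc' := osc_aux (r₁ (P j)) hrc hrper (hmean (P j)) M (hMb _ hPj)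
      have hsub2 : (∫ s in P j..P (j+1), r₁ (P j) (ω * s))
          = ω⁻¹ • ∫ u in ω * P j..ω * P (j+1), r₁ (P j) u :=
        intervalIntegral.integral_comp_mul_left _ (ne_of_gt hωpos)
      have : (∫ s in P j..P (j+1), g s)
          = a (P j) * (ω⁻¹ * ∫ u in ω * P j..ω * P (j+1), r₁ (P j) u) := by
        simp only [hgdef]
        rw [intervalIntegral.integral_const_mul, hsub2, smul_eq_mul]
      rw [this, abs_mul, abs_mul]
      calc |a (P j)| * (|ω⁻¹| * |∫ u in ω * P j..ω * P (j+1), r₁ (P j) u|)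
          ≤ 1 * (ω⁻¹ * (4*π*M)) := by
            apply mul_le_mul (ha1 _) _ (by positivity) one_pos.le
            rw [abs_of_nonneg (by positivity)]
            exact mul_le_mul_of_nonneg_left (hosc' _ _) (by positivity)
        _ = ω⁻¹ * (4*π*M) := one_mul _
    calc |∫ s in P j..P (j+1), f s|
        ≤ |∫ s in P j..P (j+1), f s - g s| + |∫ s in P j..P (j+1), g s| := by
          rw [hsub]; exact abs_add_le _ _
      _ ≤ ε/(2*T) * (t/N) + ω⁻¹ * (4*π*M) := add_le_add hdiff hosc
  -- sum up
  calc |∫ s in (0:ℝ)..t, f s|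
      ≤ ∑ j ∈ Finset.range N, |∫ s in P j..P (j+1), f s| := by
        rw [hsum]; exact Finset.abs_sum_le_sum_abs _ _
    _ ≤ ∑ _j ∈ Finset.range N, (ε/(2*T) * (t/N) + ω⁻¹ * (4*π*M)) :=
        Finset.sum_le_sum hpiece
    _ = (N:ℝ) * (ε/(2*T) * (t/N)) + (N:ℝ) * (ω⁻¹ * (4*π*M)) := by
        rw [Finset.sum_const, Finset.card_range, nsmul_eq_mul]; ring
    _ ≤ ε/2 + ε/2 := by
        apply add_le_add
        · have : (N:ℝ) * (ε/(2*T) * (t/N)) = ε * t / (2*T) := by field_simp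
          rw [this, div_le_iff₀ (by positivity)]
          nlinarith
        · have h8 : 8*π*M*(N:ℝ) ≤ ω * ε := by
            rwa [div_le_iff₀ hε] at hωbig
          have heq : (N:ℝ) * (ω⁻¹ * (4*π*M)) = 4*π*M*(N:ℝ)/ω := by
            field_simp
          rw [heq, div_le_iff₀ hωpos]
          nlinarith
    _ = ε := by ring

theorem stmt_15 (T : ℝ) (hT : 0 < T) (r₁ : ℝ → ℝ → ℝ)
    (hcont : Continuous fun p : ℝ × ℝ => r₁ p.1 p.2)
    (hper : ∀ t τ, r₁ t (τ + 2 * π) = r₁ t τ)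
    (hmean : ∀ t, (1 / (2 * π)) * ∫ τ in (0:ℝ)..(2 * π), r₁ t τ = 0)
    (hucont : ∀ ε > (0:ℝ), ∃ δ > (0:ℝ), ∀ t₁ t₂ τ₁ τ₂ : ℝ,
      t₁ ∈ Icc (0:ℝ) T → t₂ ∈ Icc (0:ℝ) T → |t₁ - t₂| < δ → |τ₁ - τ₂| < δ →
      |r₁ t₁ τ₁ - r₁ t₂ τ₂| < ε)
    (lam : ℝ) (hlam : 0 < lam) :
    Tendsto (fun ω : ℝ => ⨆ t : Icc (0:ℝ) T,
        |∫ s in (0:ℝ)..(t:ℝ), Real.sin (Real.sqrt lam * ((t:ℝ) - s)) * r₁ s (ω * s)|)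
      atTop (nhds 0) := by
  have hmean' : ∀ t, ∫ τ in (0:ℝ)..(2*π), r₁ t τ = 0 := by
    intro t
    have h := hmean t
    have h2 : (1 / (2*π)) ≠ 0 := by positivity
    exact (mul_eq_zero.mp h).resolve_left h2
  set c : ℝ := Real.sqrt lam with hc
  have hc0 : 0 ≤ c := Real.sqrt_nonneg _
  have hsind : ∀ x y : ℝ, |Real.sin x - Real.sin y| ≤ |x - y| := by
    intro x y
    rw [Real.sin_sub_sin, abs_mul, abs_mul]
    have h1 : |Real.sin ((x-y)/2)| ≤ |(x-y)/2| := Real.abs_sin_le_abs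
    have h2 : |Real.cos ((x+y)/2)| ≤ 1 := Real.abs_cos_le_one _
    have h3 : |(x-y)/2| = |x-y|/2 := by rw [abs_div]; norm_num
    rw [h3] at h1
    have h4 : |(2:ℝ)| = 2 := by norm_num
    rw [h4]
    nlinarith [abs_nonneg (Real.sin ((x-y)/2)), abs_nonneg (x-y),
      abs_nonneg (Real.cos ((x+y)/2))]
  have hcosd : ∀ x y : ℝ, |Real.cos x - Real.cos y| ≤ |x - y| := by
    intro x y
    rw [Real.cos_sub_cos, abs_mul, abs_mul]
    have h1 : |Real.sin ((x-y)/2)| ≤ |(x-y)/2| := Real.abs_sin_le_abs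
    have h2 : |Real.sin ((x+y)/2)| ≤ 1 := Real.abs_sin_le_one _
    have h3 : |(x-y)/2| = |x-y|/2 := by rw [abs_div]; norm_num
    rw [h3] at h1
    have h4 : |(-2:ℝ)| = 2 := by norm_num
    rw [h4]
    nlinarith [abs_nonneg (Real.sin ((x-y)/2)), abs_nonneg (x-y),
      abs_nonneg (Real.sin ((x+y)/2))]
  have hcoslip : ∀ s₁ s₂ : ℝ, |Real.cos (c*s₁) - Real.cos (c*s₂)| ≤ c * |s₁ - s₂| := by
    intro s₁ s₂
    calc |Real.cos (c*s₁) - Real.cos (c*s₂)| ≤ |c*s₁ - c*s₂| := hcosd _ _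
      _ = c * |s₁ - s₂| := by rw [← mul_sub, abs_mul, abs_of_nonneg hc0]
  have hsinlip : ∀ s₁ s₂ : ℝ, |Real.sin (c*s₁) - Real.sin (c*s₂)| ≤ c * |s₁ - s₂| := by
    intro s₁ s₂
    calc |Real.sin (c*s₁) - Real.sin (c*s₂)| ≤ |c*s₁ - c*s₂| := hsind _ _
      _ = c * |s₁ - s₂| := by rw [← mul_sub, abs_mul, abs_of_nonneg hc0]
  rw [NormedAddCommGroup.tendsto_nhds_zero]
  intro ε hε
  obtain ⟨Ω₁, hΩ₁, hbound₁⟩ := key_aux T hT r₁ hcont hper hmean' hucont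
    (fun s => Real.cos (c*s)) (Real.continuous_cos.comp (continuous_const.mul continuous_id))
    (fun s => Real.abs_cos_le_one _) c hc0 hcoslip (ε/4) (by positivity)
  obtain ⟨Ω₂, hΩ₂, hbound₂⟩ := key_aux T hT r₁ hcont hper hmean' hucont
    (fun s => Real.sin (c*s)) (Real.continuous_sin.comp (continuous_const.mul continuous_id))
    (fun s => Real.abs_sin_le_one _) c hc0 hsinlip (ε/4) (by positivity)
  filter_upwards [eventually_ge_atTop (max Ω₁ Ω₂)] with ω hω
  have hω₁ : Ω₁ ≤ ω := le_trans (le_max_left _ _) hω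
  have hω₂ : Ω₂ ≤ ω := le_trans (le_max_right _ _) hω
  haveI : Nonempty (Icc (0:ℝ) T) := ⟨⟨0, left_mem_Icc.mpr hT.le⟩⟩
  set F : Icc (0:ℝ) T → ℝ := fun t =>
    |∫ s in (0:ℝ)..(t:ℝ), Real.sin (c * ((t:ℝ) - s)) * r₁ s (ω * s)| with hF
  have hbd : ∀ t : Icc (0:ℝ) T, F t ≤ ε/2 := by
    rintro ⟨t, ht⟩
    have hint1 : IntervalIntegrable (fun s => Real.cos (c*s) * r₁ s (ω*s)) volume 0 t := by
      apply Continuous.intervalIntegrable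
      exact (Real.continuous_cos.comp (continuous_const.mul continuous_id)).mul
        (hcont.comp (continuous_id.prodMk (continuous_const.mul continuous_id)))
    have hint2 : IntervalIntegrable (fun s => Real.sin (c*s) * r₁ s (ω*s)) volume 0 t := by
      apply Continuous.intervalIntegrable
      exact (Real.continuous_sin.comp (continuous_const.mul continuous_id)).mul
        (hcont.comp (continuous_id.prodMk (continuous_const.mul continuous_id)))
    have heq : (∫ s in (0:ℝ)..t, Real.sin (c * (t - s)) * r₁ s (ω * s))
        = Real.sin (c*t) * (∫ s in (0:ℝ)..t, Real.cos (c*s) * r₁ s (ω*s))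
          - Real.cos (c*t) * (∫ s in (0:ℝ)..t, Real.sin (c*s) * r₁ s (ω*s)) := by
      rw [← intervalIntegral.integral_const_mul, ← intervalIntegral.integral_const_mul,
        ← intervalIntegral.integral_sub (hint1.const_mul _) (hint2.const_mul _)]
      apply intervalIntegral.integral_congr
      intro s _
      show Real.sin (c * (t - s)) * r₁ s (ω * s)
          = Real.sin (c*t) * (Real.cos (c*s) * r₁ s (ω*s))
            - Real.cos (c*t) * (Real.sin (c*s) * r₁ s (ω*s))
      rw [show c*(t-s) = c*t - c*s by ring, Real.sin_sub]
      ring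
    show |∫ s in (0:ℝ)..t, Real.sin (c * (t - s)) * r₁ s (ω * s)| ≤ ε/2
    rw [heq]
    have h1 := hbound₁ ω hω₁ t ht
    have h2 := hbound₂ ω hω₂ t ht
    calc |Real.sin (c*t) * (∫ s in (0:ℝ)..t, Real.cos (c*s) * r₁ s (ω*s))
          - Real.cos (c*t) * (∫ s in (0:ℝ)..t, Real.sin (c*s) * r₁ s (ω*s))|
        ≤ |Real.sin (c*t)| * |∫ s in (0:ℝ)..t, Real.cos (c*s) * r₁ s (ω*s)|
          + |Real.cos (c*t)| * |∫ s in (0:ℝ)..t, Real.sin (c*s) * r₁ s (ω*s)| := by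
          refine le_trans (abs_sub _ _) ?_
          rw [abs_mul, abs_mul]
      _ ≤ 1 * (ε/4) + 1 * (ε/4) := by
          apply add_le_add
          · exact mul_le_mul (Real.abs_sin_le_one _) h1 (abs_nonneg _) one_pos.le
          · exact mul_le_mul (Real.abs_cos_le_one _) h2 (abs_nonneg _) one_pos.le
      _ = ε/2 := by ring
  have hbdd : BddAbove (Set.range F) := by
    refine ⟨ε/2, ?_⟩
    rintro x ⟨t, rfl⟩
    exact hbd t
  have hsup_le : (⨆ t : Icc (0:ℝ) T, F t) ≤ ε/2 := ciSup_le hbd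
  have hsup_ge : 0 ≤ ⨆ t : Icc (0:ℝ) T, F t :=
    le_trans (abs_nonneg _) (le_ciSup hbdd ⟨0, left_mem_Icc.mpr hT.le⟩)
  rw [Real.norm_eq_abs, abs_of_nonneg hsup_ge]
  linarith
end
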